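/- arXiv:2106.07231 — 2 statements merged into one kernel-verified Lean document; each statement's English description precedes it below -/
import Mathlib

section
/- In H, the element a² has order exactly 2^{n-1}, the element b has order at most 2^{n-1}, and the exponent of the centralizer C_H(H') is 2^{n-1}. -/
namespace MIP

/-- Relators of the group `G`. -/
def grels (n m : ℕ) : Set (FreeGroup (Fin 3)) :=
  {(FreeGroup.of 2)⁻¹ * ((FreeGroup.of 1)⁻¹ * (FreeGroup.of 0)⁻¹ * FreeGroup.of 1 * FreeGroup.of 0),
   FreeGroup.of 0 ^ (2 ^ n), FreeGroup.of 1 ^ (2 ^ m), FreeGroup.of 2 ^ 4,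
   (FreeGroup.of 0)⁻¹ * FreeGroup.of 2 * FreeGroup.of 0 * FreeGroup.of 2,
   (FreeGroup.of 1)⁻¹ * FreeGroup.of 2 * FreeGroup.of 1 * FreeGroup.of 2}

/-- Relators of the group `H`. -/
def hrels (n m : ℕ) : Set (FreeGroup (Fin 3)) :=
  {(FreeGroup.of 2)⁻¹ * ((FreeGroup.of 1)⁻¹ * (FreeGroup.of 0)⁻¹ * FreeGroup.of 1 * FreeGroup.of 0),
   FreeGroup.of 0 ^ (2 ^ n), FreeGroup.of 1 ^ (2 ^ m), FreeGroup.of 2 ^ 4,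
   (FreeGroup.of 0)⁻¹ * FreeGroup.of 2 * FreeGroup.of 0 * FreeGroup.of 2,
   (FreeGroup.of 1)⁻¹ * FreeGroup.of 2 * FreeGroup.of 1 * (FreeGroup.of 2)⁻¹}

abbrev GG (n m : ℕ) := PresentedGroup (grels n m)
abbrev HH (n m : ℕ) := PresentedGroup (hrels n m)

def gx (n m : ℕ) : GG n m := PresentedGroup.of 0
def gy (n m : ℕ) : GG n m := PresentedGroup.of 1
def gz (n m : ℕ) : GG n m := PresentedGroup.of 2
def ha (n m : ℕ) : HH n m := PresentedGroup.of 0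
def hb (n m : ℕ) : HH n m := PresentedGroup.of 1
def hc (n m : ℕ) : HH n m := PresentedGroup.of 2

def EE (t : ZMod 2) : ZMod 4 := t.val
def SS (t : ZMod 2) : ZMod 4 := 1 - 2 * t.val

lemma EE_add : ∀ u v : ZMod 2, EE (u + v) = EE u + EE v * SS u := by decide
lemma SS_add : ∀ u v : ZMod 2, SS (u + v) = SS u * SS v := by decide
lemma EE_zero : EE 0 = 0 := by decide
lemma SS_zero : SS 0 = 1 := by decide

section K
variable (M N : ℕ) (h4 : (4:ℕ) ∣ M) (h2 : (2:ℕ) ∣ N)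

def tw (t : ZMod 2) : ZMod M × ZMod 4 →+ ZMod M × ZMod 4 where
  toFun p := (p.1, ZMod.castHom h4 (ZMod 4) p.1 * EE t + p.2 * SS t)
  map_zero' := by simp
  map_add' p q := by
    ext
    · rfl
    · simp only [Prod.fst_add, Prod.snd_add, map_add]; ring

lemma tw_tw (t u : ZMod 2) (p : ZMod M × ZMod 4) :
    tw M h4 t (tw M h4 u p) = tw M h4 (t + u) p := by
  ext
  · rfl
  · simp only [tw, AddMonoidHom.coe_mk, ZeroHom.coe_mk, EE_add t u, SS_add t u]
    ring

lemma tw_zero (p : ZMod M × ZMod 4) : tw M h4 0 p = p := by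
  ext
  · rfl
  · simp [tw, EE_zero, SS_zero]

def twE (t : ZMod 2) : ZMod M × ZMod 4 ≃+ ZMod M × ZMod 4 :=
  { tw M h4 t with
    invFun := tw M h4 (-t)
    left_inv := fun p => by
      show tw M h4 (-t) (tw M h4 t p) = p
      rw [tw_tw, neg_add_cancel, tw_zero]
    right_inv := fun p => by
      show tw M h4 t (tw M h4 (-t) p) = p
      rw [tw_tw, add_neg_cancel, tw_zero] }

lemma twE_apply (t : ZMod 2) (p : ZMod M × ZMod 4) :
    twE M h4 t p = (p.1, ZMod.castHom h4 (ZMod 4) p.1 * EE t + p.2 * SS t) := rfl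

def phi : Multiplicative (ZMod N) →* MulAut (Multiplicative (ZMod M × ZMod 4)) where
  toFun g := AddEquiv.toMultiplicative (twE M h4 (ZMod.castHom h2 (ZMod 2) g.toAdd))
  map_one' := by
    ext x : 1
    show (twE M h4 (ZMod.castHom h2 (ZMod 2) 0) x.toAdd : ZMod M × ZMod 4) = x.toAdd
    rw [map_zero]
    exact tw_zero M h4 _
  map_mul' g h := by
    ext x : 1
    show (twE M h4 (ZMod.castHom h2 (ZMod 2) (g.toAdd + h.toAdd)) x.toAdd : ZMod M × ZMod 4)
      = twE M h4 _ (twE M h4 _ x.toAdd)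
    rw [map_add]
    exact (tw_tw M h4 _ _ _).symm

abbrev KK := Multiplicative (ZMod M × ZMod 4) ⋊[phi M N h4 h2] Multiplicative (ZMod N)

end K



section K2
variable (M N : ℕ) (h4 : (4:ℕ) ∣ M) (h2 : (2:ℕ) ∣ N)

def aK : KK M N h4 h2 := SemidirectProduct.inr (Multiplicative.ofAdd 1)
def bK : KK M N h4 h2 := SemidirectProduct.inl (Multiplicative.ofAdd (1,0))
def cK : KK M N h4 h2 := SemidirectProduct.inl (Multiplicative.ofAdd (0,1))

lemma phi_apply (g : Multiplicative (ZMod N)) (p : ZMod M × ZMod 4) :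
    phi M N h4 h2 g (Multiplicative.ofAdd p) =
      Multiplicative.ofAdd (p.1,
        ZMod.castHom h4 (ZMod 4) p.1 * EE (ZMod.castHom h2 (ZMod 2) g.toAdd)
          + p.2 * SS (ZMod.castHom h2 (ZMod 2) g.toAdd)) := rfl

lemma EE_one : EE 1 = 1 := by decide
lemma SS_one : SS 1 = -1 := by decide
lemma EE_neg_one : EE (-1) = 1 := by decide
lemma SS_neg_one : SS (-1) = -1 := by decide

lemma phi1 (p : ZMod M × ZMod 4) :
    phi M N h4 h2 (Multiplicative.ofAdd 1) (Multiplicative.ofAdd p) =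
      Multiplicative.ofAdd (p.1, ZMod.castHom h4 (ZMod 4) p.1 - p.2) := by
  rw [phi_apply]
  simp only [toAdd_ofAdd, map_one, EE_one, SS_one, mul_one, mul_neg, ← sub_eq_add_neg]

lemma phineg1 (p : ZMod M × ZMod 4) :
    phi M N h4 h2 (Multiplicative.ofAdd 1)⁻¹ (Multiplicative.ofAdd p) =
      Multiplicative.ofAdd (p.1, ZMod.castHom h4 (ZMod 4) p.1 - p.2) := by
  rw [← ofAdd_neg, phi_apply]
  simp only [toAdd_ofAdd, map_neg, map_one, (by decide : (-1 : ZMod 2) = 1),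
    EE_one, SS_one, mul_one, mul_neg, ← sub_eq_add_neg]

lemma phineg1' (p : ZMod M × ZMod 4) :
    phi M N h4 h2 (Multiplicative.ofAdd (-1)) (Multiplicative.ofAdd p) =
      Multiplicative.ofAdd (p.1, ZMod.castHom h4 (ZMod 4) p.1 - p.2) := by
  rw [ofAdd_neg]; exact phineg1 M N h4 h2 p

lemma rel5K : (aK M N h4 h2)⁻¹ * cK M N h4 h2 * aK M N h4 h2 * cK M N h4 h2 = 1 := by
  ext : 1
  · simp only [aK, cK, SemidirectProduct.mul_left, SemidirectProduct.mul_right,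
      SemidirectProduct.inv_left, SemidirectProduct.inv_right, SemidirectProduct.left_inl,
      SemidirectProduct.right_inl, SemidirectProduct.left_inr, SemidirectProduct.right_inr,
      one_mul, mul_one, inv_one, map_one, map_mul, phineg1, phi1, ← ofAdd_add,
      Prod.mk_add_mk]
    simp [← ofAdd_add, Prod.ext_iff]
  · simp [aK, cK, SemidirectProduct.mul_left, SemidirectProduct.mul_right,
      SemidirectProduct.inv_left, SemidirectProduct.inv_right]

lemma rel1K : (cK M N h4 h2)⁻¹ *
    ((bK M N h4 h2)⁻¹ * (aK M N h4 h2)⁻¹ * bK M N h4 h2 * aK M N h4 h2) = 1 := by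
  ext : 1
  · simp only [aK, bK, cK, SemidirectProduct.mul_left, SemidirectProduct.mul_right,
      SemidirectProduct.inv_left, SemidirectProduct.inv_right, SemidirectProduct.left_inl,
      SemidirectProduct.right_inl, SemidirectProduct.left_inr, SemidirectProduct.right_inr,
      one_mul, mul_one, inv_one, map_one, map_mul, map_inv, phineg1, phineg1', phi1, ← ofAdd_add,
      ← ofAdd_neg, Prod.mk_add_mk]
    simp [← ofAdd_add, ← ofAdd_neg, Prod.ext_iff, phi1, phineg1, phineg1', Prod.mk_add_mk]
  · simp [aK, bK, cK, SemidirectProduct.mul_left, SemidirectProduct.mul_right,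
      SemidirectProduct.inv_left, SemidirectProduct.inv_right]

lemma rel6K : (bK M N h4 h2)⁻¹ * cK M N h4 h2 * bK M N h4 h2 * (cK M N h4 h2)⁻¹ = 1 := by
  ext : 1
  · simp only [bK, cK, SemidirectProduct.mul_left, SemidirectProduct.mul_right,
      SemidirectProduct.inv_left, SemidirectProduct.inv_right, SemidirectProduct.left_inl,
      SemidirectProduct.right_inl, SemidirectProduct.left_inr, SemidirectProduct.right_inr,
      one_mul, mul_one, inv_one, map_one, map_mul, map_inv, phineg1, phineg1', phi1, ← ofAdd_add,
      ← ofAdd_neg, Prod.mk_add_mk]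
    simp [← ofAdd_add, ← ofAdd_neg, Prod.ext_iff, Prod.mk_add_mk]
  · simp [bK, cK, SemidirectProduct.mul_left, SemidirectProduct.mul_right,
      SemidirectProduct.inv_left, SemidirectProduct.inv_right]

lemma aK_pow (k : ℕ) :
    aK M N h4 h2 ^ k = SemidirectProduct.inr (Multiplicative.ofAdd (k : ZMod N)) := by
  rw [aK, ← map_pow, ← ofAdd_nsmul, nsmul_eq_mul, mul_one]

lemma bK_pow (k : ℕ) :
    bK M N h4 h2 ^ k = SemidirectProduct.inl (Multiplicative.ofAdd ((k : ZMod M), 0)) := by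
  rw [bK, ← map_pow, ← ofAdd_nsmul]
  norm_num [Prod.smul_mk, nsmul_eq_mul]

lemma cK_pow (k : ℕ) :
    cK M N h4 h2 ^ k = SemidirectProduct.inl (Multiplicative.ofAdd (0, (k : ZMod 4))) := by
  rw [cK, ← map_pow, ← ofAdd_nsmul]
  norm_num [Prod.smul_mk, nsmul_eq_mul]

lemma rel2K : aK M N h4 h2 ^ N = 1 := by
  rw [aK_pow, ZMod.natCast_self, ofAdd_zero, map_one]

lemma rel3K : bK M N h4 h2 ^ M = 1 := by
  rw [bK_pow, ZMod.natCast_self]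
  rw [Prod.mk_zero_zero, ofAdd_zero, map_one]

lemma rel4K : cK M N h4 h2 ^ 4 = 1 := by
  rw [cK_pow, ZMod.natCast_self]
  rw [Prod.mk_zero_zero, ofAdd_zero, map_one]

end K2

section Hom
variable (n m : ℕ) (h4 : (4:ℕ) ∣ 2^m) (h2 : (2:ℕ) ∣ 2^n)

def fgen : Fin 3 → KK (2^m) (2^n) h4 h2 :=
  ![aK (2^m) (2^n) h4 h2, bK (2^m) (2^n) h4 h2, cK (2^m) (2^n) h4 h2]

lemma fgen_rels : ∀ r ∈ hrels n m, FreeGroup.lift (fgen n m h4 h2) r = 1 := by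
  intro r hr
  simp only [hrels, Set.mem_insert_iff, Set.mem_singleton_iff] at hr
  rcases hr with rfl | rfl | rfl | rfl | rfl | rfl <;>
    simp only [map_mul, map_inv, map_pow, FreeGroup.lift_apply_of, fgen,
      Matrix.cons_val_zero, Matrix.cons_val_one, Matrix.head_cons, Matrix.cons_val_two,
      Matrix.tail_cons]
  · exact rel1K _ _ _ _
  · exact rel2K _ _ _ _
  · exact rel3K _ _ _ _
  · exact rel4K _ _ _ _
  · exact rel5K _ _ _ _
  · exact rel6K _ _ _ _

def fhom : HH n m →* KK (2^m) (2^n) h4 h2 := PresentedGroup.toGroup (fgen_rels n m h4 h2)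

lemma fhom_a : fhom n m h4 h2 (ha n m) = aK (2^m) (2^n) h4 h2 := PresentedGroup.toGroup.of _
lemma fhom_b : fhom n m h4 h2 (hb n m) = bK (2^m) (2^n) h4 h2 := PresentedGroup.toGroup.of _
lemma fhom_c : fhom n m h4 h2 (hc n m) = cK (2^m) (2^n) h4 h2 := PresentedGroup.toGroup.of _

lemma fhom_surj : Function.Surjective (fhom n m h4 h2) := by
  rintro ⟨u, x⟩
  refine ⟨hb n m ^ (u.toAdd.1).val * hc n m ^ (u.toAdd.2).val * ha n m ^ (x.toAdd).val, ?_⟩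
  haveI : NeZero (2^m) := ⟨(Nat.two_pow_pos m).ne'⟩
  haveI : NeZero (2^n) := ⟨(Nat.two_pow_pos n).ne'⟩
  rw [map_mul, map_mul, map_pow, map_pow, map_pow, fhom_a, fhom_b, fhom_c,
    bK_pow, cK_pow, aK_pow]
  simp only [ZMod.natCast_val, ZMod.cast_id]
  ext : 1
  · simp [SemidirectProduct.mul_left, ← ofAdd_add, Prod.mk_add_mk, map_one]
  · simp [SemidirectProduct.mul_right]

end Hom

section HLem
variable (n m : ℕ)

lemma hmk (r : FreeGroup (Fin 3)) (hr : r ∈ hrels n m) : PresentedGroup.mk (hrels n m) r = 1 :=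
  (QuotientGroup.eq_one_iff _).2 (Subgroup.subset_normalClosure hr)

lemma ha_pow : ha n m ^ (2^n) = 1 := by
  have := hmk n m (FreeGroup.of 0 ^ (2^n)) (by simp [hrels])
  rwa [map_pow] at this

lemma hb_pow : hb n m ^ (2^m) = 1 := by
  have := hmk n m (FreeGroup.of 1 ^ (2^m)) (by simp [hrels])
  rwa [map_pow] at this

lemma hc_pow : hc n m ^ 4 = 1 := by
  have := hmk n m (FreeGroup.of 2 ^ 4) (by simp [hrels])
  rwa [map_pow] at this

lemma hc_eq : hc n m = (hb n m)⁻¹ * (ha n m)⁻¹ * hb n m * ha n m := by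
  have := hmk n m _ (show _ ∈ hrels n m from Set.mem_insert _ _)
  simp only [map_mul, map_inv] at this
  rw [← inv_mul_eq_one]
  exact this

lemma rel5H : (ha n m)⁻¹ * hc n m * ha n m * hc n m = 1 := by
  have := hmk n m ((FreeGroup.of 0)⁻¹ * FreeGroup.of 2 * FreeGroup.of 0 * FreeGroup.of 2)
    (by simp [hrels])
  simp only [map_mul, map_inv] at this
  exact this

lemma rel6H : (hb n m)⁻¹ * hc n m * hb n m * (hc n m)⁻¹ = 1 := by
  have := hmk n m ((FreeGroup.of 1)⁻¹ * FreeGroup.of 2 * FreeGroup.of 1 * (FreeGroup.of 2)⁻¹)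
    (by simp [hrels])
  simp only [map_mul, map_inv] at this
  exact this

lemma cbH : hc n m * hb n m = hb n m * hc n m := by
  calc hc n m * hb n m
      = hb n m * ((hb n m)⁻¹ * hc n m * hb n m * (hc n m)⁻¹) * hc n m := by group
    _ = hb n m * hc n m := by rw [rel6H, mul_one]

lemma caH : hc n m * ha n m = ha n m * (hc n m)⁻¹ := by
  calc hc n m * ha n m
      = ha n m * ((ha n m)⁻¹ * hc n m * ha n m * hc n m) * (hc n m)⁻¹ := by group
    _ = ha n m * (hc n m)⁻¹ := by rw [rel5H, mul_one]

lemma baH : hb n m * ha n m = ha n m * hb n m * hc n m := by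
  rw [hc_eq]
  group

lemma hcb (K J : ℕ) : hc n m ^ K * hb n m ^ J = hb n m ^ J * hc n m ^ K :=
  (Commute.pow_pow (cbH n m) K J)

lemma hc_inv : (hc n m)⁻¹ = hc n m ^ 3 :=
  inv_eq_of_mul_eq_one_right (by rw [← pow_succ']; exact hc_pow n m)

lemma ckaH (k : ℕ) : hc n m ^ k * ha n m = ha n m * hc n m ^ (3 * k) := by
  induction k with
  | zero => simp
  | succ k ih =>
    have e : 3 * (k+1) = 3 * k + 3 := by ring
    calc hc n m ^ (k+1) * ha n m = hc n m ^ k * (hc n m * ha n m) := by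
          rw [pow_succ, mul_assoc]
      _ = hc n m ^ k * (ha n m * (hc n m)⁻¹) := by rw [caH]
      _ = (hc n m ^ k * ha n m) * (hc n m)⁻¹ := by rw [← mul_assoc]
      _ = ha n m * hc n m ^ (3 * k) * (hc n m)⁻¹ := by rw [ih]
      _ = ha n m * (hc n m ^ (3 * k) * hc n m ^ 3) := by rw [hc_inv, mul_assoc]
      _ = ha n m * hc n m ^ (3 * (k+1)) := by rw [← pow_add, ← e]

lemma ckaiH (k i : ℕ) : ∃ k', hc n m ^ k * ha n m ^ i = ha n m ^ i * hc n m ^ k' := by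
  induction i with
  | zero => exact ⟨k, by simp⟩
  | succ i ih =>
    obtain ⟨k', h⟩ := ih
    refine ⟨3 * k', ?_⟩
    calc hc n m ^ k * ha n m ^ (i+1) = (hc n m ^ k * ha n m ^ i) * ha n m := by
          rw [pow_succ, mul_assoc]
      _ = ha n m ^ i * (hc n m ^ k' * ha n m) := by rw [h, mul_assoc]
      _ = ha n m ^ i * (ha n m * hc n m ^ (3 * k')) := by rw [ckaH]
      _ = ha n m ^ (i+1) * hc n m ^ (3 * k') := by rw [pow_succ, mul_assoc]

lemma bjaH (j : ℕ) : hb n m ^ j * ha n m = ha n m * hb n m ^ j * hc n m ^ j := by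
  induction j with
  | zero => simp
  | succ j ih =>
    calc hb n m ^ (j+1) * ha n m = hb n m ^ j * (hb n m * ha n m) := by
          rw [pow_succ, mul_assoc]
      _ = hb n m ^ j * (ha n m * hb n m * hc n m) := by rw [baH]
      _ = (hb n m ^ j * ha n m) * hb n m * hc n m := by group
      _ = ha n m * hb n m ^ j * hc n m ^ j * hb n m * hc n m := by rw [ih]
      _ = ha n m * hb n m ^ j * (hc n m ^ j * hb n m ^ 1) * hc n m := by group
      _ = ha n m * hb n m ^ j * (hb n m ^ 1 * hc n m ^ j) * hc n m := by rw [hcb]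
      _ = ha n m * hb n m ^ (j+1) * hc n m ^ (j+1) := by
          rw [pow_succ (hb n m) j, pow_succ (hc n m) j, pow_one]; group

lemma bjaiH (j i : ℕ) : ∃ k, hb n m ^ j * ha n m ^ i = ha n m ^ i * hb n m ^ j * hc n m ^ k := by
  induction i with
  | zero => exact ⟨0, by simp⟩
  | succ i ih =>
    obtain ⟨k, h⟩ := ih
    refine ⟨j + 3 * k, ?_⟩
    calc hb n m ^ j * ha n m ^ (i+1) = (hb n m ^ j * ha n m ^ i) * ha n m := by
          rw [pow_succ, mul_assoc]
      _ = ha n m ^ i * hb n m ^ j * (hc n m ^ k * ha n m) := by rw [h]; group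
      _ = ha n m ^ i * hb n m ^ j * (ha n m * hc n m ^ (3 * k)) := by rw [ckaH]
      _ = ha n m ^ i * (hb n m ^ j * ha n m) * hc n m ^ (3 * k) := by group
      _ = ha n m ^ i * (ha n m * hb n m ^ j * hc n m ^ j) * hc n m ^ (3 * k) := by rw [bjaH]
      _ = ha n m ^ (i+1) * hb n m ^ j * (hc n m ^ j * hc n m ^ (3 * k)) := by
          rw [pow_succ]; group
      _ = ha n m ^ (i+1) * hb n m ^ j * hc n m ^ (j + 3 * k) := by rw [← pow_add]

lemma NFmul (i j k i' j' k' : ℕ) : ∃ i'' j'' k'' : ℕ,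
    (ha n m ^ i * hb n m ^ j * hc n m ^ k) * (ha n m ^ i' * hb n m ^ j' * hc n m ^ k') =
      ha n m ^ i'' * hb n m ^ j'' * hc n m ^ k'' := by
  obtain ⟨k1, h1⟩ := ckaiH n m k i'
  obtain ⟨k2, h2⟩ := bjaiH n m j i'
  refine ⟨i + i', j + j', k2 + k1 + k', ?_⟩
  calc (ha n m ^ i * hb n m ^ j * hc n m ^ k) * (ha n m ^ i' * hb n m ^ j' * hc n m ^ k')
      = ha n m ^ i * hb n m ^ j * (hc n m ^ k * ha n m ^ i') * hb n m ^ j' * hc n m ^ k' := by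
        group
    _ = ha n m ^ i * hb n m ^ j * (ha n m ^ i' * hc n m ^ k1) * hb n m ^ j' * hc n m ^ k' := by
        rw [h1]
    _ = ha n m ^ i * (hb n m ^ j * ha n m ^ i') * (hc n m ^ k1 * hb n m ^ j') * hc n m ^ k' := by
        group
    _ = ha n m ^ i * (ha n m ^ i' * hb n m ^ j * hc n m ^ k2) * (hb n m ^ j' * hc n m ^ k1) *
          hc n m ^ k' := by rw [h2, hcb]
    _ = ha n m ^ i * ha n m ^ i' * hb n m ^ j * (hc n m ^ k2 * hb n m ^ j') * hc n m ^ k1 *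
          hc n m ^ k' := by group
    _ = ha n m ^ i * ha n m ^ i' * hb n m ^ j * (hb n m ^ j' * hc n m ^ k2) * hc n m ^ k1 *
          hc n m ^ k' := by rw [hcb]
    _ = ha n m ^ (i + i') * hb n m ^ (j + j') * hc n m ^ (k2 + k1 + k') := by
        rw [pow_add, pow_add, pow_add, pow_add]; group

lemma inv_pow_eq_of_pow_eq_one {G : Type*} [Group G] {x : G} {T : ℕ} (h : x ^ T = 1)
    (hT : 0 < T) (i : ℕ) : (x ^ i)⁻¹ = x ^ (i * (T - 1)) := by
  apply inv_eq_of_mul_eq_one_left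
  rw [← pow_add]
  have e : i * (T - 1) + i = T * i := by
    calc i * (T - 1) + i = i * ((T - 1) + 1) := by ring
      _ = T * i := by rw [Nat.sub_add_cancel hT, Nat.mul_comm]
  rw [e, pow_mul, h, one_pow]

lemma NFinv (i j k : ℕ) : ∃ i' j' k' : ℕ,
    (ha n m ^ i * hb n m ^ j * hc n m ^ k)⁻¹ = ha n m ^ i' * hb n m ^ j' * hc n m ^ k' := by
  have hAi : (ha n m ^ i)⁻¹ = ha n m ^ (i * (2^n - 1)) :=
    inv_pow_eq_of_pow_eq_one (ha_pow n m) (Nat.two_pow_pos n) i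
  have hBj : (hb n m ^ j)⁻¹ = hb n m ^ (j * (2^m - 1)) :=
    inv_pow_eq_of_pow_eq_one (hb_pow n m) (Nat.two_pow_pos m) j
  have hCk : (hc n m ^ k)⁻¹ = hc n m ^ (k * 3) :=
    inv_pow_eq_of_pow_eq_one (hc_pow n m) (by norm_num) k
  obtain ⟨k1, h1⟩ := ckaiH n m (k * 3) (i * (2^n - 1))
  obtain ⟨k2, h2⟩ := bjaiH n m (j * (2^m - 1)) (i * (2^n - 1))
  refine ⟨i * (2^n - 1), j * (2^m - 1), k2 + k1, ?_⟩
  calc (ha n m ^ i * hb n m ^ j * hc n m ^ k)⁻¹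
      = (hc n m ^ k)⁻¹ * (hb n m ^ j)⁻¹ * (ha n m ^ i)⁻¹ := by group
    _ = hc n m ^ (k * 3) * hb n m ^ (j * (2^m - 1)) * ha n m ^ (i * (2^n - 1)) := by
        rw [hAi, hBj, hCk]
    _ = hb n m ^ (j * (2^m - 1)) * (hc n m ^ (k * 3) * ha n m ^ (i * (2^n - 1))) := by
        rw [hcb]; group
    _ = hb n m ^ (j * (2^m - 1)) * (ha n m ^ (i * (2^n - 1)) * hc n m ^ k1) := by rw [h1]
    _ = (hb n m ^ (j * (2^m - 1)) * ha n m ^ (i * (2^n - 1))) * hc n m ^ k1 := by group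
    _ = ha n m ^ (i * (2^n - 1)) * hb n m ^ (j * (2^m - 1)) * hc n m ^ k2 * hc n m ^ k1 := by
        rw [h2]
    _ = ha n m ^ (i * (2^n - 1)) * hb n m ^ (j * (2^m - 1)) * hc n m ^ (k2 + k1) := by
        rw [pow_add]; group

lemma NF (g : HH n m) : ∃ i j k : ℕ, g = ha n m ^ i * hb n m ^ j * hc n m ^ k := by
  let P : Subgroup (HH n m) :=
    { carrier := {g | ∃ i j k : ℕ, g = ha n m ^ i * hb n m ^ j * hc n m ^ k}
      one_mem' := ⟨0, 0, 0, by simp⟩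
      mul_mem' := by
        rintro x y ⟨i, j, k, rfl⟩ ⟨i', j', k', rfl⟩
        exact NFmul n m i j k i' j' k'
      inv_mem' := by
        rintro x ⟨i, j, k, rfl⟩
        exact NFinv n m i j k }
  refine PresentedGroup.generated_by (hrels n m) P ?_ g
  intro x
  fin_cases x
  · exact ⟨1, 0, 0, by simp [ha]⟩
  · exact ⟨0, 1, 0, by simp [hb]⟩
  · exact ⟨0, 0, 1, by simp [hc]⟩

end HLem

section KStruct
variable (M N : ℕ) (h4 : (4:ℕ) ∣ M) (h2 : (2:ℕ) ∣ N)

lemma phi_of_cast_zero (y : Multiplicative (ZMod N))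
    (hy : ZMod.castHom h2 (ZMod 2) y.toAdd = 0) (u : Multiplicative (ZMod M × ZMod 4)) :
    phi M N h4 h2 y u = u := by
  have : u = Multiplicative.ofAdd u.toAdd := rfl
  rw [this, phi_apply, hy, EE_zero, SS_zero]
  simp

lemma aK2_central (g : KK M N h4 h2) : aK M N h4 h2 ^ 2 * g = g * aK M N h4 h2 ^ 2 := by
  rw [aK_pow]
  have hc2 : ZMod.castHom h2 (ZMod 2)
      ((Multiplicative.ofAdd ((2 : ℕ) : ZMod N)).toAdd) = 0 := by
    rw [toAdd_ofAdd, map_natCast]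
    decide
  ext : 1
  · rw [SemidirectProduct.mul_left, SemidirectProduct.mul_left]
    rw [SemidirectProduct.left_inr, SemidirectProduct.right_inr, one_mul]
    rw [phi_of_cast_zero M N h4 h2 _ hc2, map_one, mul_one]
  · rw [SemidirectProduct.mul_right, SemidirectProduct.mul_right,
      SemidirectProduct.right_inr]
    exact mul_comm _ _

lemma even_of_commute_cK (g : KK M N h4 h2)
    (h : cK M N h4 h2 * g = g * cK M N h4 h2) :
    ZMod.castHom h2 (ZMod 2) g.right.toAdd = 0 := by
  have hl := congrArg SemidirectProduct.left h
  rw [SemidirectProduct.mul_left, SemidirectProduct.mul_left, cK,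
    SemidirectProduct.left_inl, SemidirectProduct.right_inl, map_one] at hl
  have hg : g.left = Multiplicative.ofAdd g.left.toAdd := rfl
  rw [hg, phi_apply] at hl
  simp only [map_zero, zero_mul, zero_add, one_mul] at hl
  have h2' : Multiplicative.ofAdd ((0 : ZMod M), (1 : ZMod 4)) =
      Multiplicative.ofAdd ((0 : ZMod M), SS (ZMod.castHom h2 (ZMod 2) g.right.toAdd)) := by
    have := mul_right_cancel (hl.trans (mul_comm _ _))
    exact this
  have h3 : (1 : ZMod 4) = SS (ZMod.castHom h2 (ZMod 2) g.right.toAdd) := by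
    have := congrArg (fun z => (Multiplicative.toAdd z).2) h2'
    simpa using this
  revert h3
  generalize ZMod.castHom h2 (ZMod 2) g.right.toAdd = t
  revert t
  decide

lemma pow_components (g : KK M N h4 h2)
    (hg : ZMod.castHom h2 (ZMod 2) g.right.toAdd = 0) (t : ℕ) :
    g ^ t = ⟨g.left ^ t, g.right ^ t⟩ := by
  induction t with
  | zero => ext <;> simp
  | succ t ih =>
    rw [pow_succ, ih]
    ext : 1
    · rw [SemidirectProduct.mul_left]
      show g.left ^ t * phi M N h4 h2 (g.right ^ t) g.left = g.left ^ (t+1)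
      have hcast : ZMod.castHom h2 (ZMod 2) ((g.right ^ t).toAdd) = 0 := by
        have : (g.right ^ t).toAdd = t • g.right.toAdd := by
          rw [← toAdd_pow]
        rw [this, map_nsmul, hg, smul_zero]
      rw [phi_of_cast_zero M N h4 h2 _ hcast, ← pow_succ]
    · rw [SemidirectProduct.mul_right]
      show g.right ^ t * g.right = g.right ^ (t+1)
      rw [← pow_succ]

end KStruct

section KSpec
variable (n m : ℕ) (h4 : (4:ℕ) ∣ 2^m) (h2 : (2:ℕ) ∣ 2^n)

lemma pow_even_eq_one (hm : 2 < m) (hmn : m < n) (g : KK (2^m) (2^n) h4 h2)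
    (hg : ZMod.castHom h2 (ZMod 2) g.right.toAdd = 0) : g ^ (2^(n-1)) = 1 := by
  rw [pow_components _ _ h4 h2 g hg]
  have hleft : g.left ^ (2^(n-1)) = 1 := by
    have : g.left = Multiplicative.ofAdd g.left.toAdd := rfl
    rw [this, ← ofAdd_nsmul]
    have e1 : (2^(n-1)) • g.left.toAdd.1 = 0 := by
      have hz : ((2^(n-1) : ℕ) : ZMod (2^m)) = 0 :=
        (ZMod.natCast_eq_zero_iff _ _).mpr (pow_dvd_pow 2 (by omega))
      rw [nsmul_eq_mul, hz, zero_mul]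
    have e2 : (2^(n-1)) • g.left.toAdd.2 = 0 := by
      have hz : ((2^(n-1) : ℕ) : ZMod 4) = 0 := by
        rw [ZMod.natCast_eq_zero_iff]
        calc (4:ℕ) = 2^2 := by norm_num
          _ ∣ 2^(n-1) := pow_dvd_pow 2 (by omega)
      rw [nsmul_eq_mul, hz, zero_mul]
    have : (2^(n-1)) • g.left.toAdd = 0 := Prod.ext e1 e2
    rw [this, ofAdd_zero]
  have hright : g.right ^ (2^(n-1)) = 1 := by
    have hx : g.right = Multiplicative.ofAdd g.right.toAdd := rfl
    rw [hx, ← ofAdd_nsmul]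
    have hval : (2:ℕ) ∣ (g.right.toAdd).val := by
      rw [← ZMod.natCast_eq_zero_iff]
      rw [ZMod.castHom_apply, ← ZMod.natCast_val] at hg
      exact hg
    obtain ⟨c, hcv⟩ := hval
    have : (2^(n-1)) • g.right.toAdd = 0 := by
      have hv : g.right.toAdd = ((g.right.toAdd.val : ℕ) : ZMod (2^n)) := by
        rw [ZMod.natCast_val, ZMod.cast_id]
      rw [hv, nsmul_eq_mul, ← Nat.cast_mul, ZMod.natCast_eq_zero_iff, hcv]
      have e : 2^(n-1) * (2 * c) = 2^n * c := by
        rw [← mul_assoc, ← pow_succ]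
        congr 2
        omega
      rw [e]
      exact Dvd.intro c rfl
    rw [this, ofAdd_zero]
  rw [hleft, hright]
  rfl

lemma orderOf_aK2 (hn : 0 < n) : orderOf (aK (2^m) (2^n) h4 h2 ^ 2) = 2^(n-1) := by
  have e : aK (2^m) (2^n) h4 h2 ^ 2 =
      SemidirectProduct.inr (Multiplicative.ofAdd ((2:ℕ) : ZMod (2^n))) := aK_pow _ _ h4 h2 2
  rw [e, orderOf_injective _ SemidirectProduct.inr_injective,
    orderOf_ofAdd_eq_addOrderOf, ZMod.addOrderOf_coe 2 (Nat.two_pow_pos n).ne']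
  have hg : Nat.gcd (2^n) 2 = 2 := Nat.gcd_eq_right (dvd_pow_self 2 hn.ne')
  rw [hg]
  rw [show (2:ℕ)^n = 2^(n-1) * 2 by rw [← pow_succ]; congr 1; omega]
  exact Nat.mul_div_cancel _ (by norm_num)

def kkEquiv : KK (2^m) (2^n) h4 h2 ≃ (ZMod (2^m) × ZMod 4) × ZMod (2^n) where
  toFun g := (g.left.toAdd, g.right.toAdd)
  invFun p := ⟨Multiplicative.ofAdd p.1, Multiplicative.ofAdd p.2⟩
  left_inv g := rfl
  right_inv p := rfl

lemma card_KK : Nat.card (KK (2^m) (2^n) h4 h2) = 2^m * 4 * 2^n := by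
  rw [Nat.card_congr (kkEquiv n m h4 h2), Nat.card_prod, Nat.card_prod,
    Nat.card_zmod, Nat.card_zmod, Nat.card_zmod]

lemma finite_KK : Finite (KK (2^m) (2^n) h4 h2) := by
  haveI : NeZero (2^m) := ⟨(Nat.two_pow_pos m).ne'⟩
  haveI : NeZero (2^n) := ⟨(Nat.two_pow_pos n).ne'⟩
  exact Finite.of_equiv _ (kkEquiv n m h4 h2).symm

end KSpec

section Final
variable (n m : ℕ)

lemma pow_reduce {G : Type*} [Group G] (x : G) {T : ℕ} (h : x ^ T = 1) (i : ℕ) :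
    x ^ i = x ^ (i % T) := by
  conv_lhs => rw [← Nat.div_add_mod i T]
  rw [pow_add, pow_mul, h, one_pow, one_mul]

lemma HH_fin_surj : Function.Surjective
    (fun t : Fin (2^n) × Fin (2^m) × Fin 4 =>
      ha n m ^ (t.1 : ℕ) * hb n m ^ (t.2.1 : ℕ) * hc n m ^ (t.2.2 : ℕ)) := by
  intro g
  obtain ⟨i, j, k, rfl⟩ := NF n m g
  refine ⟨⟨⟨i % 2^n, Nat.mod_lt _ (Nat.two_pow_pos n)⟩, ⟨j % 2^m, Nat.mod_lt _ (Nat.two_pow_pos m)⟩,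
    ⟨k % 4, Nat.mod_lt _ (by norm_num)⟩⟩, ?_⟩
  simp only
  rw [← pow_reduce _ (ha_pow n m), ← pow_reduce _ (hb_pow n m), ← pow_reduce _ (hc_pow n m)]

lemma finite_HH : Finite (HH n m) := Finite.of_surjective _ (HH_fin_surj n m)

lemma card_HH_le : Nat.card (HH n m) ≤ 2^n * (2^m * 4) := by
  have := Nat.card_le_card_of_surjective _ (HH_fin_surj n m)
  simpa using this

lemma fhom_bij (h4 : (4:ℕ) ∣ 2^m) (h2 : (2:ℕ) ∣ 2^n) :
    Function.Bijective (fhom n m h4 h2) := by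
  haveI := finite_HH n m
  rw [Nat.bijective_iff_surjective_and_card]
  refine ⟨fhom_surj n m h4 h2, le_antisymm ?_ ?_⟩
  · calc Nat.card (HH n m) ≤ 2^n * (2^m * 4) := card_HH_le n m
      _ = 2^m * 4 * 2^n := by ring
      _ = Nat.card (KK (2^m) (2^n) h4 h2) := (card_KK n m h4 h2).symm
  · exact Nat.card_le_card_of_surjective _ (fhom_surj n m h4 h2)

end Final

/-- In `H`, the element `a²` has order exactly `2^(n-1)`, the element `b`
has order at most `2^(n-1)`, and the exponent of the centralizer `C_H(H')` is
`2^(n-1)`. -/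
theorem statement_9 (n m : ℕ) (hm : 2 < m) (hmn : m < n) :
    orderOf (ha n m ^ 2) = 2 ^ (n - 1) ∧
    orderOf (hb n m) ≤ 2 ^ (n - 1) ∧
    Monoid.exponent (Subgroup.centralizer (commutator (HH n m) : Set (HH n m))) =
      2 ^ (n - 1) := by
  have h4 : (4:ℕ) ∣ 2^m := by
    calc (4:ℕ) = 2^2 := by norm_num
      _ ∣ 2^m := pow_dvd_pow 2 (by omega)
  have h2 : (2:ℕ) ∣ 2^n := dvd_pow_self 2 (by omega)
  have hn1 : 0 < n := by omega
  have finj := (fhom_bij n m h4 h2).1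
  have ord_a2 : orderOf (ha n m ^ 2) = 2^(n-1) := by
    have hdvd1 : orderOf (ha n m ^ 2) ∣ 2^(n-1) := by
      apply orderOf_dvd_of_pow_eq_one
      rw [← pow_mul, show 2 * 2^(n-1) = 2^n by rw [← pow_succ']; congr 1; omega]
      exact ha_pow n m
    have hdvd2 : 2^(n-1) ∣ orderOf (ha n m ^ 2) := by
      have := orderOf_map_dvd (fhom n m h4 h2) (ha n m ^ 2)
      rwa [map_pow, fhom_a, orderOf_aK2 n m h4 h2 hn1] at this
    exact Nat.dvd_antisymm hdvd1 hdvd2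
  refine ⟨ord_a2, ?_, ?_⟩
  · have hd : orderOf (hb n m) ∣ 2^m := orderOf_dvd_of_pow_eq_one (hb_pow n m)
    exact Nat.le_of_dvd (Nat.two_pow_pos _) (hd.trans (pow_dvd_pow 2 (by omega)))
  · have hcmem : hc n m ∈ commutator (HH n m) := by
      open scoped commutatorElement in
      have he : hc n m = ⁅(hb n m)⁻¹, (ha n m)⁻¹⁆ := by
        rw [commutatorElement_def, hc_eq n m]; group
      rw [he]
      exact Subgroup.commutator_mem_commutator (Subgroup.mem_top _) (Subgroup.mem_top _)
    have upper : Monoid.exponent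
        (Subgroup.centralizer (commutator (HH n m) : Set (HH n m))) ∣ 2^(n-1) := by
      apply Monoid.exponent_dvd_of_forall_pow_eq_one
      rintro ⟨x, hx⟩
      have hcomm : hc n m * x = x * hc n m := Subgroup.mem_centralizer_iff.mp hx _ hcmem
      have h1 : cK (2^m) (2^n) h4 h2 * fhom n m h4 h2 x =
          fhom n m h4 h2 x * cK (2^m) (2^n) h4 h2 := by
        rw [← fhom_c, ← map_mul, ← map_mul, hcomm]
      have h2' := even_of_commute_cK (2^m) (2^n) h4 h2 _ h1
      have h3 := pow_even_eq_one n m h4 h2 hm hmn _ h2'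
      have h5 : x ^ (2^(n-1)) = 1 := finj (by rw [map_pow, h3, map_one])
      exact Subtype.ext (by simpa using h5)
    have ha2mem : ha n m ^ 2 ∈
        Subgroup.centralizer (commutator (HH n m) : Set (HH n m)) := by
      rw [Subgroup.mem_centralizer_iff]
      intro g hg
      apply finj
      rw [map_mul, map_mul, map_pow, fhom_a]
      exact (aK2_central (2^m) (2^n) h4 h2 _).symm
    have lower : 2^(n-1) ∣ Monoid.exponent
        (Subgroup.centralizer (commutator (HH n m) : Set (HH n m))) := by
      have ho : orderOf ((⟨ha n m ^ 2, ha2mem⟩ :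
          Subgroup.centralizer (commutator (HH n m) : Set (HH n m)))) = 2^(n-1) := by
        rw [Subgroup.orderOf_mk]; exact ord_a2
      rw [← ho]
      exact Monoid.order_dvd_exponent _
    exact Nat.dvd_antisymm upper lower

end MIP
end

section
/- Let J be the two-sided ideal of the group algebra kH (k the field with 2 elements) generated by the element c − 1. Then J⁴ = 0, and consequently every element of 1 + J has fourth power equal to 1. -/
namespace MIP

/-- The group algebra of `H` over the field with 2 elements. -/
abbrev kH (n m : ℕ) := MonoidAlgebra (ZMod 2) (HH n m)

/-- The embedding of `H` into its group algebra over `𝔽₂`. -/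
noncomputable def e (n m : ℕ) : HH n m →* kH n m := MonoidAlgebra.of (ZMod 2) (HH n m)

/-- The augmentation map `kH → k`, the `k`-algebra map sending every element of `H` to 1. -/
noncomputable def aug (n m : ℕ) : kH n m →ₐ[ZMod 2] ZMod 2 :=
  MonoidAlgebra.lift (ZMod 2) (ZMod 2) (HH n m) 1

/-- The augmentation ideal `I` of `kH`, as a `k`-submodule (it is a two-sided ideal). -/
noncomputable def augIdeal (n m : ℕ) : Submodule (ZMod 2) (kH n m) :=
  LinearMap.ker (aug n m).toLinearMap

/-- The element `ỹ = b(a+b+ab)c` of `kH`. -/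
noncomputable def yt (n m : ℕ) : kH n m :=
  e n m (hb n m) * (e n m (ha n m) + e n m (hb n m) + e n m (ha n m * hb n m)) *
    e n m (hc n m)



section aux

lemma hrel_one (n m : ℕ) {r : FreeGroup (Fin 3)} (hr : r ∈ hrels n m) :
    PresentedGroup.mk (hrels n m) r = 1 := by
  change (QuotientGroup.mk r : PresentedGroup (hrels n m)) = 1
  rw [QuotientGroup.eq_one_iff]
  exact Subgroup.subset_normalClosure hr

lemma hc4 (n m : ℕ) : (hc n m) ^ 4 = 1 := by
  have := hrel_one n m (show FreeGroup.of 2 ^ 4 ∈ hrels n m by simp [hrels])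
  simpa [hc, PresentedGroup.of] using this

lemma conj_a (n m : ℕ) : (ha n m)⁻¹ * hc n m * ha n m = (hc n m)⁻¹ := by
  have := hrel_one n m
    (show (FreeGroup.of 0)⁻¹ * FreeGroup.of 2 * FreeGroup.of 0 * FreeGroup.of 2 ∈ hrels n m by
      simp [hrels])
  simp only [map_mul, map_inv] at this
  exact eq_inv_of_mul_eq_one_left this

lemma conj_b (n m : ℕ) : (hb n m)⁻¹ * hc n m * hb n m = hc n m := by
  have := hrel_one n m
    (show (FreeGroup.of 1)⁻¹ * FreeGroup.of 2 * FreeGroup.of 1 * (FreeGroup.of 2)⁻¹ ∈ hrels n m by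
      simp [hrels])
  simp only [map_mul, map_inv] at this
  have h : ((hb n m)⁻¹ * hc n m * hb n m) * (hc n m)⁻¹ = 1 := this
  rw [mul_inv_eq_one] at h
  exact h

/-- helper: undo a conjugation equation -/
lemma conj_undo {G : Type*} [Group G] {x c d : G} (h : x⁻¹ * c * x = d) : x * d * x⁻¹ = c := by
  rw [← h]; group

lemma conj_all (n m : ℕ) (h : HH n m) :
    h⁻¹ * hc n m * h = hc n m ∨ h⁻¹ * hc n m * h = (hc n m)⁻¹ := by
  set c := hc n m with hcdef
  let S : Subgroup (HH n m) :=
    { carrier := {h | h⁻¹ * c * h = c ∨ h⁻¹ * c * h = c⁻¹}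
      one_mem' := by simp
      mul_mem' := by
        rintro x y hx hy
        have key : (x*y)⁻¹ * c * (x*y) = y⁻¹ * (x⁻¹ * c * x) * y := by group
        rcases hx with h1 | h1
        · rw [Set.mem_setOf_eq, key, h1]; exact hy
        · rw [Set.mem_setOf_eq, key, h1]
          have k2 : y⁻¹ * c⁻¹ * y = (y⁻¹ * c * y)⁻¹ := by group
          rcases hy with h2 | h2
          · right; rw [k2, h2]
          · left; rw [k2, h2, inv_inv]
      inv_mem' := by
        rintro x hx
        rcases hx with h1 | h1
        · left
          have := conj_undo h1
          simpa using this
        · right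
          have h2 := congrArg Inv.inv (conj_undo h1)
          rw [inv_inv, ← h2]; group }
  have : h ∈ S := by
    apply PresentedGroup.generated_by
    intro j
    fin_cases j
    · right; exact conj_a n m
    · left; exact conj_b n m
    · left; show c⁻¹ * c * c = c; group
  exact this

lemma push_comp {R : Type*} [Ring R] {p q : R} (hp : ∀ x, ∃ y, p * x = y * p)
    (hq : ∀ x, ∃ y, q * x = y * q) :
    ∀ x, ∃ y, (p * q) * x = y * (p * q) := by
  intro x
  obtain ⟨y1, hy1⟩ := hq x
  obtain ⟨y2, hy2⟩ := hp y1
  exact ⟨y2, by rw [mul_assoc, hy1, ← mul_assoc, hy2, mul_assoc]⟩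

lemma mul_mul_push {R : Type*} [Ring R] {p : R} (hp : ∀ x, ∃ y, p * x = y * p) (u v q : R) :
    ∃ t, (u * p) * (v * q) = t * (p * q) := by
  obtain ⟨y, hy⟩ := hp v
  refine ⟨u * y, ?_⟩
  rw [mul_assoc u p _, ← mul_assoc p v q, hy, mul_assoc y p q, ← mul_assoc u y _]

lemma two_eq_zero (n m : ℕ) : (2 : kH n m) = 0 := by
  have h : (2 : kH n m) = algebraMap (ZMod 2) (kH n m) 2 := (map_ofNat _ 2).symm
  rw [h, show (2 : ZMod 2) = 0 by decide, map_zero]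

lemma add_self_zero (n m : ℕ) (x : kH n m) : x + x = 0 := by
  rw [← two_mul, two_eq_zero, zero_mul]

lemma neg_eq_self (n m : ℕ) (x : kH n m) : -x = x :=
  neg_eq_of_add_eq_zero_left (add_self_zero n m x)

lemma sub_comm' (n m : ℕ) (a b : kH n m) : a - b = b - a := by
  rw [← neg_sub a b, neg_eq_self]

lemma sq_one_add (n m : ℕ) (y : kH n m) : (y + 1) * (y + 1) = y * y + 1 := by
  have h : (y + 1) * (y + 1) = y * y + (y + y) + 1 := by noncomm_ring
  rw [h, add_self_zero, add_zero]

lemma pushw (n m : ℕ) :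
    ∀ x : kH n m, ∃ y, (e n m (hc n m) - 1) * x = y * (e n m (hc n m) - 1) := by
  intro x
  induction x using MonoidAlgebra.induction_on with
  | of g =>
    show ∃ y, (e n m (hc n m) - 1) * e n m g = y * (e n m (hc n m) - 1)
    rcases conj_all n m g with h | h
    · have hcg : hc n m * g = g * hc n m := by
        have h2 := congrArg (fun z => g * z) h
        simpa [mul_assoc] using h2
      refine ⟨e n m g, ?_⟩
      rw [sub_mul, one_mul, ← map_mul, hcg, map_mul, mul_sub, mul_one]
    · have hcg : hc n m * g = g * (hc n m)⁻¹ := by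
        have h2 := congrArg (fun z => g * z) h
        simpa [mul_assoc] using h2
      have hinv : e n m ((hc n m)⁻¹) - 1 = e n m ((hc n m)⁻¹) * (e n m (hc n m) - 1) := by
        rw [mul_sub, mul_one, ← map_mul, inv_mul_cancel, map_one, sub_comm']
      refine ⟨e n m g * e n m ((hc n m)⁻¹), ?_⟩
      calc (e n m (hc n m) - 1) * e n m g = e n m (hc n m * g) - e n m g := by
            rw [sub_mul, one_mul, ← map_mul]
        _ = e n m g * (e n m ((hc n m)⁻¹) - 1) := by
            rw [hcg, map_mul, mul_sub, mul_one]
        _ = e n m g * (e n m ((hc n m)⁻¹) * (e n m (hc n m) - 1)) := by rw [hinv]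
        _ = (e n m g * e n m ((hc n m)⁻¹)) * (e n m (hc n m) - 1) := by rw [mul_assoc]
  | add f g hf hg =>
    obtain ⟨y1, h1⟩ := hf
    obtain ⟨y2, h2⟩ := hg
    exact ⟨y1 + y2, by rw [mul_add, h1, h2, add_mul]⟩
  | smul r f hf =>
    obtain ⟨y, h⟩ := hf
    exact ⟨r • y, by rw [mul_smul_comm, h, smul_mul_assoc]⟩

lemma w4_zero (n m : ℕ) :
    (((e n m (hc n m) - 1) * (e n m (hc n m) - 1)) * (e n m (hc n m) - 1)) *
      (e n m (hc n m) - 1) = 0 := by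
  set x := e n m (hc n m) with hx
  have hw : x - 1 = x + 1 := by rw [sub_eq_add_neg, neg_eq_self]
  have hx4 : (x * x) * (x * x) = 1 := by
    have hp : (x * x) * (x * x) = x ^ 4 := by
      rw [← pow_two x, ← pow_add]
    rw [hp, hx, ← map_pow, hc4, map_one]
  rw [mul_assoc, hw, sq_one_add, sq_one_add, hx4, add_self_zero]

end aux

/-- Let `J` be the two-sided ideal of the group algebra `kH` (`k` the
field with 2 elements) generated by the element `c - 1`. Then `J⁴ = 0` (i.e. every
product of four elements of `J` vanishes), and consequently every element of `1 + J`
has fourth power equal to `1`. -/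
theorem statement_16 (n m : ℕ) (hm : 2 < m) (hmn : m < n) :
    (∀ j₁ j₂ j₃ j₄ : kH n m,
        j₁ ∈ TwoSidedIdeal.span {e n m (hc n m) - 1} →
        j₂ ∈ TwoSidedIdeal.span {e n m (hc n m) - 1} →
        j₃ ∈ TwoSidedIdeal.span {e n m (hc n m) - 1} →
        j₄ ∈ TwoSidedIdeal.span {e n m (hc n m) - 1} →
        j₁ * j₂ * j₃ * j₄ = 0) ∧
    ∀ j : kH n m, j ∈ TwoSidedIdeal.span {e n m (hc n m) - 1} →
      (1 + j) ^ 4 = 1 := by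
  set w := e n m (hc n m) - 1 with hw
  have hpush : ∀ x : kH n m, ∃ y, w * x = y * w := pushw n m
  let I : TwoSidedIdeal (kH n m) := TwoSidedIdeal.mk' {x : kH n m | ∃ y, x = y * w}
    ⟨0, by rw [zero_mul]⟩
    (by rintro _ _ ⟨y1, rfl⟩ ⟨y2, rfl⟩; exact ⟨y1 + y2, (add_mul _ _ _).symm⟩)
    (by rintro _ ⟨y, rfl⟩; exact ⟨-y, (neg_mul _ _).symm⟩)
    (by rintro x _ ⟨y, rfl⟩; exact ⟨x * y, (mul_assoc _ _ _).symm⟩)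
    (by rintro _ z ⟨y, rfl⟩
        obtain ⟨t, ht⟩ := hpush z
        exact ⟨y * t, by rw [mul_assoc, ht, ← mul_assoc]⟩)
  have hspan : ∀ j : kH n m, j ∈ TwoSidedIdeal.span {e n m (hc n m) - 1} → ∃ y, j = y * w := by
    intro j hj
    have hsub : ({e n m (hc n m) - 1} : Set (kH n m)) ⊆ I := by
      rw [Set.singleton_subset_iff]
      show (e n m (hc n m) - 1) ∈ I
      rw [TwoSidedIdeal.mem_mk']
      exact ⟨1, (one_mul _).symm⟩
    have := TwoSidedIdeal.mem_span_iff.mp hj I hsub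
    rwa [TwoSidedIdeal.mem_mk'] at this
  have part1 : ∀ j₁ j₂ j₃ j₄ : kH n m,
      j₁ ∈ TwoSidedIdeal.span {e n m (hc n m) - 1} →
      j₂ ∈ TwoSidedIdeal.span {e n m (hc n m) - 1} →
      j₃ ∈ TwoSidedIdeal.span {e n m (hc n m) - 1} →
      j₄ ∈ TwoSidedIdeal.span {e n m (hc n m) - 1} →
      j₁ * j₂ * j₃ * j₄ = 0 := by
    intro j₁ j₂ j₃ j₄ h₁ h₂ h₃ h₄
    obtain ⟨y1, rfl⟩ := hspan j₁ h₁
    obtain ⟨y2, rfl⟩ := hspan j₂ h₂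
    obtain ⟨y3, rfl⟩ := hspan j₃ h₃
    obtain ⟨y4, rfl⟩ := hspan j₄ h₄
    have p2 := push_comp hpush hpush
    have p3 := push_comp p2 hpush
    obtain ⟨t1, e1⟩ := mul_mul_push hpush y1 y2 w
    obtain ⟨t2, e2⟩ := mul_mul_push p2 t1 y3 w
    obtain ⟨t3, e3⟩ := mul_mul_push p3 t2 y4 w
    rw [e1, e2, e3]
    have := w4_zero n m
    rw [← hw] at this
    rw [this, mul_zero]
  refine ⟨part1, ?_⟩
  intro j hj
  have hj4 : j * j * j * j = 0 := part1 j j j j hj hj hj hj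
  have s1 : (1 + j) * (1 + j) = j * j + 1 := by rw [add_comm 1 j]; exact sq_one_add n m j
  have : (1 + j) ^ 4 = ((1 + j) * (1 + j)) * ((1 + j) * (1 + j)) := by
    rw [show (4:ℕ) = 2 + 2 from rfl, pow_add, pow_two]
  rw [this, s1, sq_one_add, ← mul_assoc, hj4, zero_add]


end MIP
end
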